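/- Let h: ℝ^d → ℝ^m be Lipschitz. Let (ξ^n) be a sequence in C_d converging uniformly to ξ₀ ∈ C_d, and let (v^n) be a sequence in L²_m with sup_n ∫₀ᵀ‖v^n(s)‖² ds < ∞ converging weakly in L²_m to v. For η ∈ C_d define Δ^n(η) = H(η, ξ₀, v) − H(η, ξ^n, v) + ∫₀ᵀ ⟨h(η(s)), v^n(s) − v(s)⟩ ds. Then for every δ > 0 and every η ∈ C_d there exist n₀ ∈ ℕ and δ₁ > 0 such that |Δ^n(η̃)| < δ whenever η̃ ∈ C_d, ‖η − η̃‖_* ≤ δ₁ and n ≥ n₀. -/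

import Mathlib

open MeasureTheory Set Filter Topology
open scoped RealInnerProductSpace ENNReal NNReal

noncomputable section

/-- `C([0,T]; ℝ^p)` with the supremum norm. -/
abbrev Pth (T : ℝ) (p : ℕ) := C(Set.Icc (0:ℝ) T, EuclideanSpace ℝ (Fin p))

/-- Extension of a path on `[0,T]` to all of `ℝ` by projection onto `[0,T]`. -/
def pext {T : ℝ} (hT : (0:ℝ) ≤ T) {p : ℕ} (η : Pth T p) : ℝ → EuclideanSpace ℝ (Fin p) :=
  fun s => η (Set.projIcc (0:ℝ) T hT s)

/-- Square integrability on `[0,T]`. -/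
def L2on (T : ℝ) {p : ℕ} (f : ℝ → EuclideanSpace ℝ (Fin p)) : Prop :=
  MeasureTheory.MemLp f 2 (MeasureTheory.volume.restrict (Set.Icc (0:ℝ) T))

/-- `H(η, η̃, ψ) = ½∫₀ᵀ ‖h(η(s)) − h(η̃(s)) − ψ(s)‖² ds`. -/
def Hfun {T : ℝ} (hT : 0 < T) {d m : ℕ}
    (h : EuclideanSpace ℝ (Fin d) → EuclideanSpace ℝ (Fin m))
    (η ηt : Pth T d) (ψ : ℝ → EuclideanSpace ℝ (Fin m)) : ℝ :=
  2⁻¹ * ∫ s in Set.Icc (0:ℝ) T, ‖h (pext hT.le η s) - h (pext hT.le ηt s) - ψ s‖ ^ 2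

lemma pext_continuous {T : ℝ} (hT : (0:ℝ) ≤ T) {p : ℕ} (η : Pth T p) :
    Continuous (pext hT η) := η.continuous.comp continuous_projIcc

lemma pext_norm_le {T : ℝ} (hT : (0:ℝ) ≤ T) {p : ℕ} (η : Pth T p) (s : ℝ) :
    ‖pext hT η s‖ ≤ ‖η‖ := η.norm_coe_le_norm _

lemma pext_sub_norm_le {T : ℝ} (hT : (0:ℝ) ≤ T) {p : ℕ} (η ηt : Pth T p) (s : ℝ) :
    ‖pext hT η s - pext hT ηt s‖ ≤ ‖η - ηt‖ := by
  have : pext hT η s - pext hT ηt s = (η - ηt) (Set.projIcc (0:ℝ) T hT s) := by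
    simp [pext]
  rw [this]; exact (η - ηt).norm_coe_le_norm _

lemma hcomp_norm_le {d m : ℕ} (h : EuclideanSpace ℝ (Fin d) → EuclideanSpace ℝ (Fin m))
    {clip : ℝ≥0} (hh : LipschitzWith clip h) (x : EuclideanSpace ℝ (Fin d)) :
    ‖h x‖ ≤ ‖h 0‖ + clip * ‖x‖ := by
  have := hh.dist_le_mul x 0
  rw [dist_eq_norm, dist_eq_norm, sub_zero] at this
  have h2 : ‖h x‖ ≤ ‖h 0‖ + ‖h x - h 0‖ := by
    have := norm_add_le (h 0) (h x - h 0); simpa using this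
  linarith

lemma hcomp_diff_le {T : ℝ} (hT : (0:ℝ) ≤ T) {d m : ℕ}
    (h : EuclideanSpace ℝ (Fin d) → EuclideanSpace ℝ (Fin m))
    {clip : ℝ≥0} (hh : LipschitzWith clip h) (η ηt : Pth T d) (s : ℝ) :
    ‖h (pext hT η s) - h (pext hT ηt s)‖ ≤ clip * ‖η - ηt‖ := by
  have := hh.dist_le_mul (pext hT η s) (pext hT ηt s)
  rw [dist_eq_norm, dist_eq_norm] at this
  exact this.trans (mul_le_mul_of_nonneg_left (pext_sub_norm_le hT η ηt s) clip.2)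

lemma memLp_h_pext {T : ℝ} (hT : 0 < T) {d m : ℕ}
    (h : EuclideanSpace ℝ (Fin d) → EuclideanSpace ℝ (Fin m))
    {clip : ℝ≥0} (hh : LipschitzWith clip h) (η : Pth T d) (p : ℝ≥0∞) :
    MemLp (fun s => h (pext hT.le η s)) p (volume.restrict (Set.Icc (0:ℝ) T)) := by
  haveI : IsFiniteMeasure (volume.restrict (Set.Icc (0:ℝ) T)) := by
    constructor
    rw [Measure.restrict_apply_univ, Real.volume_Icc]
    exact ENNReal.ofReal_lt_top
  refine MemLp.of_bound (((hh.continuous).comp (pext_continuous hT.le η)).aestronglyMeasurable)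
    (‖h 0‖ + clip * ‖η‖) ?_
  filter_upwards with s
  refine (hcomp_norm_le h hh _).trans ?_
  have h1 := pext_norm_le hT.le η s
  have h2 : (clip:ℝ) * ‖pext hT.le η s‖ ≤ clip * ‖η‖ :=
    mul_le_mul_of_nonneg_left h1 clip.2
  linarith

lemma real_sq_norm_sub {E : Type*} [NormedAddCommGroup E] [InnerProductSpace ℝ E] (x y : E) :
    ‖x‖ ^ 2 - ‖y‖ ^ 2 = ⟪x + y, x - y⟫ := by
  rw [inner_sub_right, inner_add_left, inner_add_left,
    real_inner_self_eq_norm_sq, real_inner_self_eq_norm_sq, real_inner_comm y x]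
  ring

set_option maxHeartbeats 1000000 in
/-- **Lemma 5.5 (`uniformconv`).**
With `Δ^n(η) = H(η,ξ₀,v) − H(η,ξ^n,v) + ∫₀ᵀ⟨h(η(s)), v^n(s)−v(s)⟩ds`, if `ξ^n → ξ₀`
uniformly and `v^n → v` weakly in `L²` with bounded norms, then for every `δ > 0` and
`η ∈ C_d` there are `n₀` and `δ₁ > 0` with `|Δ^n(η̃)| < δ` whenever `‖η−η̃‖_* ≤ δ₁`
and `n ≥ n₀`. -/
theorem Delta_locally_uniformly_small
    {T : ℝ} (hT : 0 < T) {d m : ℕ}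
    (h : EuclideanSpace ℝ (Fin d) → EuclideanSpace ℝ (Fin m))
    (clip : ℝ≥0) (hh : LipschitzWith clip h)
    (ξ : ℕ → Pth T d) (ξ₀ : Pth T d)
    (hξ : Filter.Tendsto ξ Filter.atTop (𝓝 ξ₀))
    (v : ℕ → ℝ → EuclideanSpace ℝ (Fin m)) (v₀ : ℝ → EuclideanSpace ℝ (Fin m))
    (hvL2 : ∀ n, L2on T (v n)) (hv₀L2 : L2on T v₀)
    (hvbd : ∃ M : ℝ, ∀ n, (∫ s in Set.Icc (0:ℝ) T, ‖v n s‖ ^ 2) ≤ M)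
    (hweak : ∀ f : ℝ → EuclideanSpace ℝ (Fin m), L2on T f →
      Filter.Tendsto (fun n => ∫ s in Set.Icc (0:ℝ) T, ⟪v n s, f s⟫)
        Filter.atTop (𝓝 (∫ s in Set.Icc (0:ℝ) T, ⟪v₀ s, f s⟫))) :
    ∀ δ > (0:ℝ), ∀ η : Pth T d, ∃ n₀ : ℕ, ∃ δ₁ > (0:ℝ),
      ∀ ηt : Pth T d, ‖η - ηt‖ ≤ δ₁ → ∀ n ≥ n₀,
        |Hfun hT h ηt ξ₀ v₀ - Hfun hT h ηt (ξ n) v₀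
          + ∫ s in Set.Icc (0:ℝ) T, ⟪h (pext hT.le ηt s), v n s - v₀ s⟫| < δ := by
  intro δ hδ η
  set μ := volume.restrict (Set.Icc (0:ℝ) T) with hμdef
  haveI : IsFiniteMeasure μ := by
    constructor
    rw [hμdef, Measure.restrict_apply_univ, Real.volume_Icc]
    exact ENNReal.ofReal_lt_top
  have hμT : (μ Set.univ).toReal = T := by
    rw [hμdef, Measure.restrict_apply_univ, Real.volume_Icc, sub_zero,
      ENNReal.toReal_ofReal hT.le]
  -- basic integrability facts
  have hv₀L2' : MemLp v₀ 2 μ := hv₀L2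
  have hvL2' : ∀ n, MemLp (v n) 2 μ := hvL2
  have hvInt : ∀ n, Integrable (v n) μ := fun n => (hvL2' n).integrable one_le_two
  have hv₀Int : Integrable v₀ μ := hv₀L2'.integrable one_le_two
  have sqInt : ∀ (w : ℝ → EuclideanSpace ℝ (Fin m)), MemLp w 2 μ →
      Integrable (fun s => ‖w s‖ ^ 2) μ :=
    fun w hw => (memLp_two_iff_integrable_sq_norm hw.1).mp hw
  have normint_le : ∀ (w : ℝ → EuclideanSpace ℝ (Fin m)), MemLp w 2 μ →
      (∫ s, ‖w s‖ ∂μ) ≤ (T + ∫ s, ‖w s‖ ^ 2 ∂μ) / 2 := by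
    intro w hw
    have h1 : Integrable (fun s => ‖w s‖) μ := (hw.integrable one_le_two).norm
    have h2 : Integrable (fun s => ‖w s‖ ^ 2) μ := sqInt w hw
    have key : (∫ s, ‖w s‖ ∂μ) ≤ ∫ s, (1 + ‖w s‖ ^ 2) / 2 ∂μ := by
      refine integral_mono h1 (((integrable_const (1:ℝ)).add h2).div_const 2) fun s => ?_
      nlinarith [sq_nonneg (‖w s‖ - 1)]
    calc (∫ s, ‖w s‖ ∂μ) ≤ ∫ s, (1 + ‖w s‖ ^ 2) / 2 ∂μ := key
      _ = (T + ∫ s, ‖w s‖ ^ 2 ∂μ) / 2 := by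
        rw [integral_div, integral_add (integrable_const (1:ℝ)) h2, integral_const, Measure.real, hμT,
          smul_eq_mul, mul_one]

  obtain ⟨M, hM⟩ := hvbd
  have hM0 : 0 ≤ M := le_trans (integral_nonneg fun s => sq_nonneg _) (hM 0)
  set M₀ := ∫ s, ‖v₀ s‖ ^ 2 ∂μ with hM₀def
  have hM₀0 : 0 ≤ M₀ := integral_nonneg fun s => sq_nonneg _
  set K := (T + M) / 2 with hKdef
  set K₀ := (T + M₀) / 2 with hK₀def
  have hK0 : 0 ≤ K := by rw [hKdef]; positivity
  have hK₀0 : 0 ≤ K₀ := by rw [hK₀def]; positivity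
  have hvnorm_le : ∀ n, (∫ s, ‖v n s‖ ∂μ) ≤ K := fun n =>
    (normint_le _ (hvL2' n)).trans (by
      have := hM n
      rw [hμdef] at this ⊢
      rw [hKdef]; linarith)
  have hv₀norm_le : (∫ s, ‖v₀ s‖ ∂μ) ≤ K₀ := normint_le _ hv₀L2'
  have hv₀norm0 : 0 ≤ ∫ s, ‖v₀ s‖ ∂μ := integral_nonneg fun s => norm_nonneg _
  -- bounds on h ∘ paths
  have haL2 : MemLp (fun s => h (pext hT.le η s)) 2 μ := by
    rw [hμdef]; exact memLp_h_pext hT h hh η 2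
  set Ca := ‖h 0‖ + (clip : ℝ) * ‖η‖ with hCadef
  have hCa : ∀ s, ‖h (pext hT.le η s)‖ ≤ Ca := fun s =>
    (hcomp_norm_le h hh _).trans (by
      have h1 := pext_norm_le hT.le η s
      have h2 : (clip:ℝ) * ‖pext hT.le η s‖ ≤ clip * ‖η‖ :=
        mul_le_mul_of_nonneg_left h1 clip.2
      rw [hCadef]; linarith)
  have hCa0 : 0 ≤ Ca := le_trans (norm_nonneg _) (hCa 0)
  set Cb := ‖h 0‖ + (clip : ℝ) * (‖ξ₀‖ + 1) with hCbdef
  have hCb0 : 0 ≤ Cb := by rw [hCbdef]; positivity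
  set C := 2 * (Ca + clip) + 2 * Cb with hCdef
  have hC0 : 0 ≤ C := by rw [hCdef]; positivity
  set CA := (C * T + 2 * K₀) / 2 with hCAdef
  have hCA0 : 0 ≤ CA := by rw [hCAdef]; positivity
  -- choice of δ₁
  set δ₁ := min 1 (δ / (4 * ((clip : ℝ) * (K + K₀) + 1))) with hδ₁def
  have hδ₁pos : 0 < δ₁ := by
    rw [hδ₁def]
    exact lt_min one_pos (div_pos hδ (by positivity))
  have hδ₁le1 : δ₁ ≤ 1 := min_le_left _ _
  have hδ₁le : δ₁ ≤ δ / (4 * ((clip : ℝ) * (K + K₀) + 1)) := min_le_right _ _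
  -- choice of n₀
  obtain ⟨n₁, hn₁⟩ := Metric.tendsto_atTop.mp
    (hweak (fun s => h (pext hT.le η s)) (by rw [L2on, ← hμdef]; exact haL2))
    (δ / 4) (by positivity)
  set ε' := min 1 (δ / (2 * ((clip : ℝ) * CA + 1))) with hε'def
  have hε'pos : 0 < ε' := by
    rw [hε'def]
    exact lt_min one_pos (div_pos hδ (by positivity))
  obtain ⟨n₂, hn₂⟩ := Metric.tendsto_atTop.mp hξ ε' hε'pos
  refine ⟨max n₁ n₂, δ₁, hδ₁pos, ?_⟩
  intro ηt hηt n hn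
  have hεn : ‖ξ n - ξ₀‖ ≤ ε' := by
    have := hn₂ n (le_trans (le_max_right _ _) hn)
    rw [dist_eq_norm] at this
    exact this.le
  have hεn1 : ‖ξ n - ξ₀‖ ≤ 1 := hεn.trans (min_le_left _ _)
  have hεn2 : ‖ξ n - ξ₀‖ ≤ δ / (2 * ((clip : ℝ) * CA + 1)) := hεn.trans (min_le_right _ _)
  have hεn0 : (0:ℝ) ≤ ‖ξ n - ξ₀‖ := norm_nonneg _
  -- pointwise bounds
  have hdiff_a : ∀ s, ‖h (pext hT.le ηt s) - h (pext hT.le η s)‖ ≤ (clip : ℝ) * δ₁ := by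
    intro s
    refine (hcomp_diff_le hT.le h hh ηt η s).trans ?_
    have : ‖ηt - η‖ = ‖η - ηt‖ := norm_sub_rev _ _
    rw [this]
    exact mul_le_mul_of_nonneg_left (hηt.trans le_rfl) clip.2
  have hat' : ∀ s, ‖h (pext hT.le ηt s)‖ ≤ Ca + clip := by
    intro s
    have h1 := hdiff_a s
    have h2 := hCa s
    have h3 : ‖h (pext hT.le ηt s)‖ ≤ ‖h (pext hT.le η s)‖
        + ‖h (pext hT.le ηt s) - h (pext hT.le η s)‖ := by
      have := norm_add_le (h (pext hT.le η s)) (h (pext hT.le ηt s) - h (pext hT.le η s))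
      simpa using this
    have h4 : (clip : ℝ) * δ₁ ≤ clip * 1 := mul_le_mul_of_nonneg_left hδ₁le1 clip.2
    rw [mul_one] at h4
    linarith
  have hbnb0 : ∀ s, ‖h (pext hT.le (ξ n) s) - h (pext hT.le ξ₀ s)‖ ≤ (clip : ℝ) * ‖ξ n - ξ₀‖ :=
    fun s => hcomp_diff_le hT.le h hh (ξ n) ξ₀ s
  have hb0 : ∀ s, ‖h (pext hT.le ξ₀ s)‖ ≤ Cb := by
    intro s
    refine (hcomp_norm_le h hh _).trans ?_
    have h1 := pext_norm_le hT.le ξ₀ s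
    have h2 : (clip:ℝ) * ‖pext hT.le ξ₀ s‖ ≤ clip * ‖ξ₀‖ := mul_le_mul_of_nonneg_left h1 clip.2
    have h3 : (clip:ℝ) * ‖ξ₀‖ ≤ clip * (‖ξ₀‖ + 1) :=
      mul_le_mul_of_nonneg_left (by linarith) clip.2
    rw [hCbdef]; linarith
  have hbn : ∀ s, ‖h (pext hT.le (ξ n) s)‖ ≤ Cb := by
    intro s
    refine (hcomp_norm_le h hh _).trans ?_
    have h1 := pext_norm_le hT.le (ξ n) s
    have h2 : ‖ξ n‖ ≤ ‖ξ₀‖ + 1 := by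
      have := norm_add_le ξ₀ (ξ n - ξ₀)
      simp only [add_sub_cancel] at this
      linarith
    have h3 : (clip:ℝ) * ‖pext hT.le (ξ n) s‖ ≤ clip * (‖ξ₀‖ + 1) :=
      mul_le_mul_of_nonneg_left (h1.trans h2) clip.2
    rw [hCbdef]; linarith
  -- Memℒp facts
  have hat'L2 : MemLp (fun s => h (pext hT.le ηt s)) 2 μ := by
    rw [hμdef]; exact memLp_h_pext hT h hh ηt 2
  have hbnL2 : MemLp (fun s => h (pext hT.le (ξ n) s)) 2 μ := by
    rw [hμdef]; exact memLp_h_pext hT h hh (ξ n) 2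
  have hb0L2 : MemLp (fun s => h (pext hT.le ξ₀ s)) 2 μ := by
    rw [hμdef]; exact memLp_h_pext hT h hh ξ₀ 2

  -- ====== Term A : the Hfun difference ======
  have hXint : Integrable
      (fun s => ‖h (pext hT.le ηt s) - h (pext hT.le ξ₀ s) - v₀ s‖ ^ 2) μ :=
    sqInt _ ((hat'L2.sub hb0L2).sub hv₀L2')
  have hYint : Integrable
      (fun s => ‖h (pext hT.le ηt s) - h (pext hT.le (ξ n) s) - v₀ s‖ ^ 2) μ :=
    sqInt _ ((hat'L2.sub hbnL2).sub hv₀L2')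
  have hAeq : Hfun hT h ηt ξ₀ v₀ - Hfun hT h ηt (ξ n) v₀
      = 2⁻¹ * ∫ s, (‖h (pext hT.le ηt s) - h (pext hT.le ξ₀ s) - v₀ s‖ ^ 2
        - ‖h (pext hT.le ηt s) - h (pext hT.le (ξ n) s) - v₀ s‖ ^ 2) ∂μ := by
    simp only [Hfun, ← hμdef]
    rw [← mul_sub, ← integral_sub hXint hYint]
  set εc := (clip : ℝ) * ‖ξ n - ξ₀‖ with hεcdef
  have hεc0 : 0 ≤ εc := by rw [hεcdef]; positivity
  have hptwA : ∀ s, ‖(‖h (pext hT.le ηt s) - h (pext hT.le ξ₀ s) - v₀ s‖ ^ 2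
      - ‖h (pext hT.le ηt s) - h (pext hT.le (ξ n) s) - v₀ s‖ ^ 2)‖
      ≤ εc * (C + 2 * ‖v₀ s‖) := by
    intro s
    set x := h (pext hT.le ηt s) - h (pext hT.le ξ₀ s) - v₀ s with hxdef
    set y := h (pext hT.le ηt s) - h (pext hT.le (ξ n) s) - v₀ s with hydef
    have hid : ‖x‖ ^ 2 - ‖y‖ ^ 2 = ⟪x + y, x - y⟫ := real_sq_norm_sub x y
    have hxy : x - y = h (pext hT.le (ξ n) s) - h (pext hT.le ξ₀ s) := by
      rw [hxdef, hydef]; abel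
    have hnxy : ‖x - y‖ ≤ εc := by rw [hxy, hεcdef]; exact hbnb0 s
    have hnx : ‖x‖ ≤ (Ca + clip) + Cb + ‖v₀ s‖ := by
      rw [hxdef]
      refine (norm_sub_le _ _).trans ?_
      have := (norm_sub_le (h (pext hT.le ηt s)) (h (pext hT.le ξ₀ s)))
      have h1 := hat' s; have h2 := hb0 s
      linarith
    have hny : ‖y‖ ≤ (Ca + clip) + Cb + ‖v₀ s‖ := by
      rw [hydef]
      refine (norm_sub_le _ _).trans ?_
      have := (norm_sub_le (h (pext hT.le ηt s)) (h (pext hT.le (ξ n) s)))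
      have h1 := hat' s; have h2 := hbn s
      linarith
    have hnxpy : ‖x + y‖ ≤ C + 2 * ‖v₀ s‖ := by
      refine (norm_add_le _ _).trans ?_
      rw [hCdef]; linarith
    rw [Real.norm_eq_abs, hid]
    refine (abs_real_inner_le_norm _ _).trans ?_
    calc ‖x + y‖ * ‖x - y‖ ≤ (C + 2 * ‖v₀ s‖) * εc :=
          mul_le_mul hnxpy hnxy (norm_nonneg _) (by positivity)
      _ = εc * (C + 2 * ‖v₀ s‖) := mul_comm _ _
  have hgInt : Integrable (fun s => εc * (C + 2 * ‖v₀ s‖)) μ :=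
    (((integrable_const C).add (hv₀Int.norm.const_mul 2)).const_mul εc)
  have hAint_le : |∫ s, (‖h (pext hT.le ηt s) - h (pext hT.le ξ₀ s) - v₀ s‖ ^ 2
      - ‖h (pext hT.le ηt s) - h (pext hT.le (ξ n) s) - v₀ s‖ ^ 2) ∂μ|
      ≤ εc * (C * T + 2 * K₀) := by
    rw [← Real.norm_eq_abs]
    refine (norm_integral_le_of_norm_le hgInt (Eventually.of_forall hptwA)).trans ?_
    have hval : ∫ s, εc * (C + 2 * ‖v₀ s‖) ∂μ
        = εc * (C * T + 2 * ∫ s, ‖v₀ s‖ ∂μ) := by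
      rw [integral_const_mul, integral_add (integrable_const C) (hv₀Int.norm.const_mul 2),
        integral_const, Measure.real, hμT, smul_eq_mul, integral_const_mul]
      ring
    rw [hval]
    have : C * T + 2 * ∫ s, ‖v₀ s‖ ∂μ ≤ C * T + 2 * K₀ := by linarith
    exact mul_le_mul_of_nonneg_left this hεc0
  have hA_half : |Hfun hT h ηt ξ₀ v₀ - Hfun hT h ηt (ξ n) v₀| ≤ δ / 2 := by
    rw [hAeq, abs_mul]
    have h2 : |(2:ℝ)⁻¹| = 2⁻¹ := by norm_num
    rw [h2]
    have hb : 2⁻¹ * |∫ s, (‖h (pext hT.le ηt s) - h (pext hT.le ξ₀ s) - v₀ s‖ ^ 2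
        - ‖h (pext hT.le ηt s) - h (pext hT.le (ξ n) s) - v₀ s‖ ^ 2) ∂μ|
        ≤ 2⁻¹ * (εc * (C * T + 2 * K₀)) :=
      mul_le_mul_of_nonneg_left hAint_le (by norm_num)
    refine hb.trans ?_
    have heq : 2⁻¹ * (εc * (C * T + 2 * K₀)) = εc * CA := by rw [hCAdef]; ring
    rw [heq, hεcdef]
    have hstep : (clip : ℝ) * ‖ξ n - ξ₀‖ * CA
        ≤ ((clip : ℝ) * CA) * (δ / (2 * ((clip : ℝ) * CA + 1))) := by
      have := mul_le_mul_of_nonneg_left hεn2 (clip.2 : (0:ℝ) ≤ clip)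
      calc (clip : ℝ) * ‖ξ n - ξ₀‖ * CA
          ≤ ((clip:ℝ) * (δ / (2 * ((clip : ℝ) * CA + 1)))) * CA :=
            mul_le_mul_of_nonneg_right this hCA0
        _ = ((clip : ℝ) * CA) * (δ / (2 * ((clip : ℝ) * CA + 1))) := by ring
    refine hstep.trans ?_
    set X := (clip : ℝ) * CA with hXdef
    have hX0 : 0 ≤ X := by rw [hXdef]; positivity
    rw [mul_div_assoc', div_le_div_iff₀ (by positivity) (by norm_num : (0:ℝ) < 2)]
    nlinarith

  -- ====== Term B ======
  have hwInt : Integrable (fun s => v n s - v₀ s) μ := (hvInt n).sub hv₀Int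
  have innInt : ∀ (f : ℝ → EuclideanSpace ℝ (Fin m)), AEStronglyMeasurable f μ → ∀ Cf : ℝ,
      (∀ s, ‖f s‖ ≤ Cf) → Integrable (fun s => ⟪f s, v n s - v₀ s⟫) μ := by
    intro f hf Cf hCf
    refine Integrable.mono' (hwInt.norm.const_mul Cf) (hf.inner hwInt.1)
      (Eventually.of_forall fun s => ?_)
    exact (norm_inner_le_norm _ _).trans (mul_le_mul_of_nonneg_right (hCf s) (norm_nonneg _))
  have hI1 : Integrable (fun s => ⟪h (pext hT.le η s), v n s - v₀ s⟫) μ :=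
    innInt _ haL2.1 Ca hCa
  have hI2 : Integrable
      (fun s => ⟪h (pext hT.le ηt s) - h (pext hT.le η s), v n s - v₀ s⟫) μ :=
    innInt _ (hat'L2.1.sub haL2.1) _ hdiff_a
  have hsplit : (∫ s, ⟪h (pext hT.le ηt s), v n s - v₀ s⟫ ∂μ)
      = (∫ s, ⟪h (pext hT.le η s), v n s - v₀ s⟫ ∂μ)
        + ∫ s, ⟪h (pext hT.le ηt s) - h (pext hT.le η s), v n s - v₀ s⟫ ∂μ := by
    rw [← integral_add hI1 hI2]
    refine integral_congr_ae (Eventually.of_forall fun s => ?_)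
    show (⟪h (pext hT.le ηt s), v n s - v₀ s⟫ : ℝ)
      = ⟪h (pext hT.le η s), v n s - v₀ s⟫
        + ⟪h (pext hT.le ηt s) - h (pext hT.le η s), v n s - v₀ s⟫
    rw [← inner_add_left]
    congr 1
    abel
  have hg2Int : Integrable (fun s => ((clip:ℝ) * δ₁) * (‖v n s‖ + ‖v₀ s‖)) μ :=
    ((hvInt n).norm.add hv₀Int.norm).const_mul _
  have hB2 : |∫ s, ⟪h (pext hT.le ηt s) - h (pext hT.le η s), v n s - v₀ s⟫ ∂μ| ≤ δ / 4 := by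
    rw [← Real.norm_eq_abs]
    refine (norm_integral_le_of_norm_le hg2Int (Eventually.of_forall fun s => ?_)).trans ?_
    · refine (norm_inner_le_norm _ _).trans ?_
      exact mul_le_mul (hdiff_a s) (norm_sub_le _ _) (norm_nonneg _) (by positivity)
    · have hval : ∫ s, ((clip:ℝ) * δ₁) * (‖v n s‖ + ‖v₀ s‖) ∂μ
          = ((clip:ℝ) * δ₁) * ((∫ s, ‖v n s‖ ∂μ) + ∫ s, ‖v₀ s‖ ∂μ) := by
        rw [integral_const_mul, integral_add (hvInt n).norm hv₀Int.norm]
      rw [hval]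
      have h1 : (∫ s, ‖v n s‖ ∂μ) + ∫ s, ‖v₀ s‖ ∂μ ≤ K + K₀ :=
        add_le_add (hvnorm_le n) hv₀norm_le
      have h2 : ((clip:ℝ) * δ₁) * ((∫ s, ‖v n s‖ ∂μ) + ∫ s, ‖v₀ s‖ ∂μ)
          ≤ ((clip:ℝ) * δ₁) * (K + K₀) := by
        refine mul_le_mul_of_nonneg_left h1 ?_
        positivity
      refine h2.trans ?_
      set Y := (clip:ℝ) * (K + K₀) with hYdef
      have hY0 : 0 ≤ Y := by rw [hYdef]; positivity
      have h3 : ((clip:ℝ) * δ₁) * (K + K₀) = Y * δ₁ := by rw [hYdef]; ring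
      rw [h3]
      have h4 : Y * δ₁ ≤ Y * (δ / (4 * (Y + 1))) :=
        mul_le_mul_of_nonneg_left hδ₁le hY0
      refine h4.trans ?_
      rw [mul_div_assoc', div_le_div_iff₀ (by positivity) (by norm_num : (0:ℝ) < 4)]
      nlinarith
  have hIvn : Integrable (fun s => ⟪v n s, h (pext hT.le η s)⟫) μ := by
    refine Integrable.mono' ((hvInt n).norm.const_mul Ca) ((hvInt n).1.inner haL2.1)
      (Eventually.of_forall fun s => ?_)
    refine (norm_inner_le_norm _ _).trans ?_
    rw [mul_comm]
    exact mul_le_mul_of_nonneg_right (hCa s) (norm_nonneg _)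
  have hIv0 : Integrable (fun s => ⟪v₀ s, h (pext hT.le η s)⟫) μ := by
    refine Integrable.mono' (hv₀Int.norm.const_mul Ca) (hv₀Int.1.inner haL2.1)
      (Eventually.of_forall fun s => ?_)
    refine (norm_inner_le_norm _ _).trans ?_
    rw [mul_comm]
    exact mul_le_mul_of_nonneg_right (hCa s) (norm_nonneg _)
  have hB1eq : (∫ s, ⟪h (pext hT.le η s), v n s - v₀ s⟫ ∂μ)
      = (∫ s, ⟪v n s, h (pext hT.le η s)⟫ ∂μ) - ∫ s, ⟪v₀ s, h (pext hT.le η s)⟫ ∂μ := by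
    rw [← integral_sub hIvn hIv0]
    refine integral_congr_ae (Eventually.of_forall fun s => ?_)
    show (⟪h (pext hT.le η s), v n s - v₀ s⟫ : ℝ)
      = ⟪v n s, h (pext hT.le η s)⟫ - ⟪v₀ s, h (pext hT.le η s)⟫
    rw [inner_sub_right, real_inner_comm, real_inner_comm (v₀ s)]
  have hB1 : |(∫ s, ⟪h (pext hT.le η s), v n s - v₀ s⟫ ∂μ)| < δ / 4 := by
    rw [hB1eq]
    have := hn₁ n (le_trans (le_max_left _ _) hn)
    rw [Real.dist_eq] at this
    simpa using this
  -- ====== assemble ======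
  rw [hsplit]
  have habs := abs_add_le (Hfun hT h ηt ξ₀ v₀ - Hfun hT h ηt (ξ n) v₀)
    ((∫ s, ⟪h (pext hT.le η s), v n s - v₀ s⟫ ∂μ)
      + ∫ s, ⟪h (pext hT.le ηt s) - h (pext hT.le η s), v n s - v₀ s⟫ ∂μ)
  have habs2 := abs_add_le (∫ s, ⟪h (pext hT.le η s), v n s - v₀ s⟫ ∂μ)
    (∫ s, ⟪h (pext hT.le ηt s) - h (pext hT.le η s), v n s - v₀ s⟫ ∂μ)
  linarith

end
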